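/- arXiv:1211.1435 — 3 statements merged into one kernel-verified Lean document; each statement's English description precedes it below -/
import Mathlib

section
/- Let d ∈ ℕ, τ > d/2, and let ψ : ℝ^d → ℝ be an integrable even function whose Fourier transform satisfies c₁(1+‖ω‖₂²)^{-τ} ≤ ψ̂(ω) ≤ c₂(1+‖ω‖₂²)^{-τ} for all ω ∈ ℝ^d, with constants 0 < c₁ ≤ c₂. Fix δ_a > 0. Then for every δ ∈ (0, δ_a] and every g ∈ H^τ(ℝ^d) there exist constants 0 < c₃ ≤ c₄ (depending only on c₁, c₂, τ, δ_a) such that c₃ ‖g‖_{Φ_δ} ≤ ‖g‖_{H^τ(ℝ^d)} ≤ c₄ δ^{-τ} ‖g‖_{Φ_δ}. -/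
open MeasureTheory

noncomputable def ft {d : ℕ} (g : EuclideanSpace ℝ (Fin d) → ℂ)
    (ω : EuclideanSpace ℝ (Fin d)) : ℂ :=
  (((2 * Real.pi) ^ (-(d : ℝ) / 2) : ℝ) : ℂ) *
    ∫ x, g x * Complex.exp (-Complex.I * ((@inner ℝ _ _ x ω : ℝ) : ℂ))

lemma ft_cont {d : ℕ} {ψ : EuclideanSpace ℝ (Fin d) → ℝ} (hψint : Integrable ψ) :
    Continuous (ft (fun x => (ψ x : ℂ))) := by
  unfold ft
  refine continuous_const.mul ?_
  refine continuous_of_dominated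
    (F := fun ω x => ((ψ x : ℂ)) * Complex.exp (-Complex.I * ((@inner ℝ _ _ x ω : ℝ) : ℂ)))
    (bound := fun x => ‖ψ x‖) ?_ ?_ hψint.norm ?_
  · intro ω
    refine (Complex.continuous_ofReal.comp_aestronglyMeasurable
      hψint.aestronglyMeasurable).mul ?_
    exact (Complex.continuous_exp.comp (continuous_const.mul
      (Complex.continuous_ofReal.comp (continuous_id.inner continuous_const)))).aestronglyMeasurable
  · intro ω
    filter_upwards with x
    have h1 : ‖Complex.exp (-Complex.I * ((@inner ℝ _ _ x ω : ℝ) : ℂ))‖ = 1 := by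
      rw [Complex.norm_exp]
      simp
    rw [norm_mul, h1, mul_one, Complex.norm_real]
  · filter_upwards with x
    exact continuous_const.mul (Complex.continuous_exp.comp (continuous_const.mul
      (Complex.continuous_ofReal.comp (continuous_const.inner continuous_id))))

lemma div_bd_upper (F h L : ℝ) (hF : 0 ≤ F) (hh : 0 < h) (hL : 1 ≤ L * h) :
    F / h ≤ L * F := by
  rw [div_le_iff₀ hh]
  nlinarith

lemma div_bd_lower (F h L : ℝ) (hF : 0 ≤ F) (hh : 0 < h) (hL : L * h ≤ 1) :
    L * F ≤ F / h := by
  rw [le_div_iff₀ hh]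
  nlinarith

set_option maxHeartbeats 1000000 in
/-- norm equivalence between the scaled native space norm `‖·‖_{Φ_δ}` and the
Sobolev norm `‖·‖_{H^τ(ℝ^d)}`, with constants depending only on `c₁, c₂, τ, δ_a`.
Here `‖g‖²_{H^τ} = ∫ |ĝ(ω)|²(1+‖ω‖²)^τ dω` and
`‖g‖²_{Φ_δ} = (2π)^{-d/2} ∫ |ĝ(ω)|²/ψ̂(δω) dω`, since `ψ̂_δ(ω) = ψ̂(δω)`. -/
theorem stmt0
    (d : ℕ) (hd : 0 < d) (τ : ℝ) (hτ : (d : ℝ) / 2 < τ)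
    (ψ : EuclideanSpace ℝ (Fin d) → ℝ)
    (hψint : Integrable ψ)
    (hψeven : ∀ x, ψ (-x) = ψ x)
    (hatψ : EuclideanSpace ℝ (Fin d) → ℝ)
    (hhat : ∀ ω, ft (fun x => (ψ x : ℂ)) ω = (hatψ ω : ℂ))
    (c₁ c₂ : ℝ) (hc₁ : 0 < c₁) (hc₁₂ : c₁ ≤ c₂)
    (hlow : ∀ ω : EuclideanSpace ℝ (Fin d), c₁ * (1 + ‖ω‖ ^ 2) ^ (-τ) ≤ hatψ ω)
    (hhigh : ∀ ω : EuclideanSpace ℝ (Fin d), hatψ ω ≤ c₂ * (1 + ‖ω‖ ^ 2) ^ (-τ))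
    (δa : ℝ) (hδa : 0 < δa) :
    ∃ c₃ c₄ : ℝ, 0 < c₃ ∧ c₃ ≤ c₄ ∧
      ∀ δ : ℝ, 0 < δ → δ ≤ δa →
        ∀ g : EuclideanSpace ℝ (Fin d) → ℂ,
          Integrable (fun ω : EuclideanSpace ℝ (Fin d) =>
            ‖ft g ω‖ ^ 2 * (1 + ‖ω‖ ^ 2) ^ τ) →
          c₃ * Real.sqrt ((2 * Real.pi) ^ (-(d : ℝ) / 2) *
              ∫ ω : EuclideanSpace ℝ (Fin d), ‖ft g ω‖ ^ 2 / hatψ (δ • ω)) ≤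
            Real.sqrt (∫ ω : EuclideanSpace ℝ (Fin d), ‖ft g ω‖ ^ 2 * (1 + ‖ω‖ ^ 2) ^ τ) ∧
          Real.sqrt (∫ ω : EuclideanSpace ℝ (Fin d), ‖ft g ω‖ ^ 2 * (1 + ‖ω‖ ^ 2) ^ τ) ≤
            c₄ * δ ^ (-τ) * Real.sqrt ((2 * Real.pi) ^ (-(d : ℝ) / 2) *
              ∫ ω : EuclideanSpace ℝ (Fin d), ‖ft g ω‖ ^ 2 / hatψ (δ • ω)) := by
  have hτ0 : 0 < τ := lt_of_le_of_lt (by positivity) hτ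
  have hc₂ : 0 < c₂ := lt_of_lt_of_le hc₁ hc₁₂
  set C : ℝ := (2 * Real.pi) ^ (-(d : ℝ) / 2) with hCdef
  have hC : 0 < C := Real.rpow_pos_of_pos (by positivity) _
  set M : ℝ := max 1 (δa ^ 2) with hMdef
  have hM1 : 1 ≤ M := le_max_left _ _
  have hM0 : 0 < M := lt_of_lt_of_le one_pos hM1
  have hMτ1 : 1 ≤ M ^ τ := Real.one_le_rpow hM1 hτ0.le
  have hMτ0 : 0 < M ^ τ := lt_of_lt_of_le one_pos hMτ1
  -- continuity of hatψ
  have hatc : Continuous hatψ := by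
    have h1 : Continuous fun ω => (ft (fun x => (ψ x : ℂ)) ω).re :=
      Complex.continuous_re.comp (ft_cont hψint)
    refine h1.congr fun ω => ?_
    rw [hhat ω, Complex.ofReal_re]
  refine ⟨Real.sqrt (c₁ / (C * M ^ τ)), Real.sqrt (c₂ * M ^ τ / C), ?_, ?_, ?_⟩
  · exact Real.sqrt_pos.mpr (by positivity)
  · apply Real.sqrt_le_sqrt
    rw [div_le_div_iff₀ (by positivity) hC]
    calc c₁ * C ≤ c₂ * C := by nlinarith
      _ = (c₂ * C) * 1 := by ring
      _ ≤ (c₂ * C) * (M ^ τ * M ^ τ) :=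
          mul_le_mul_of_nonneg_left (by nlinarith) (by positivity)
      _ = c₂ * M ^ τ * (C * M ^ τ) := by ring
  intro δ hδ hδa' g hInt
  set F : EuclideanSpace ℝ (Fin d) → ℝ := fun ω => ‖ft g ω‖ ^ 2 with hFdef
  have hF0 : ∀ ω, 0 ≤ F ω := fun ω => by positivity
  set Aint : EuclideanSpace ℝ (Fin d) → ℝ := fun ω => F ω * (1 + ‖ω‖ ^ 2) ^ τ with hAdef
  set Bint : EuclideanSpace ℝ (Fin d) → ℝ := fun ω => F ω / hatψ (δ • ω) with hBdef
  have hδ2M : δ ^ 2 ≤ M := le_trans (by nlinarith) (le_max_right 1 (δa ^ 2))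
  have hnsm : ∀ ω : EuclideanSpace ℝ (Fin d), ‖δ • ω‖ ^ 2 = δ ^ 2 * ‖ω‖ ^ 2 := by
    intro ω
    rw [norm_smul, Real.norm_eq_abs, mul_pow, sq_abs]
  have hpos : ∀ ω : EuclideanSpace ℝ (Fin d), 0 < hatψ (δ • ω) := by
    intro ω
    refine lt_of_lt_of_le ?_ (hlow (δ • ω))
    positivity
  have hbda : ∀ w : ℝ, 0 ≤ w → (1 + δ ^ 2 * w) ^ τ ≤ M ^ τ * (1 + w) ^ τ := by
    intro w hw
    calc (1 + δ ^ 2 * w) ^ τ ≤ (M * (1 + w)) ^ τ := by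
          refine Real.rpow_le_rpow (by positivity) ?_ hτ0.le
          nlinarith [mul_le_mul_of_nonneg_right hδ2M hw]
      _ = M ^ τ * (1 + w) ^ τ := Real.mul_rpow hM0.le (by positivity)
  have hbdb : ∀ w : ℝ, 0 ≤ w → (δ ^ 2 / M) ^ τ * (1 + w) ^ τ ≤ (1 + δ ^ 2 * w) ^ τ := by
    intro w hw
    calc (δ ^ 2 / M) ^ τ * (1 + w) ^ τ = ((δ ^ 2 / M) * (1 + w)) ^ τ :=
          (Real.mul_rpow (by positivity) (by positivity)).symm
      _ ≤ (1 + δ ^ 2 * w) ^ τ := by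
          refine Real.rpow_le_rpow (by positivity) ?_ hτ0.le
          have h1 : δ ^ 2 / M ≤ 1 := (div_le_one hM0).mpr hδ2M
          have h2 : δ ^ 2 / M ≤ δ ^ 2 := div_le_self (by positivity) hM1
          nlinarith [mul_le_mul_of_nonneg_right h2 hw]
  -- B ≤ K₁ A pointwise
  have hBA : ∀ ω, Bint ω ≤ (c₁⁻¹ * M ^ τ) * Aint ω := by
    intro ω
    have hw0 : (0:ℝ) ≤ ‖ω‖ ^ 2 := by positivity
    have hP : (0:ℝ) < (1 + δ ^ 2 * ‖ω‖ ^ 2) ^ τ := Real.rpow_pos_of_pos (by positivity) _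
    have h1 := hlow (δ • ω)
    rw [hnsm ω, Real.rpow_neg (by positivity)] at h1
    have h3 := hbda (‖ω‖ ^ 2) hw0
    have key : 1 ≤ (c₁⁻¹ * M ^ τ * (1 + ‖ω‖ ^ 2) ^ τ) * hatψ (δ • ω) := by
      have step1 : (c₁⁻¹ * M ^ τ * (1 + ‖ω‖ ^ 2) ^ τ) * (c₁ * ((1 + δ ^ 2 * ‖ω‖ ^ 2) ^ τ)⁻¹)
          ≤ (c₁⁻¹ * M ^ τ * (1 + ‖ω‖ ^ 2) ^ τ) * hatψ (δ • ω) :=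
        mul_le_mul_of_nonneg_left h1 (by positivity)
      have step2 : (c₁⁻¹ * M ^ τ * (1 + ‖ω‖ ^ 2) ^ τ) * (c₁ * ((1 + δ ^ 2 * ‖ω‖ ^ 2) ^ τ)⁻¹)
          = (M ^ τ * (1 + ‖ω‖ ^ 2) ^ τ) / (1 + δ ^ 2 * ‖ω‖ ^ 2) ^ τ := by
        field_simp
      have step3 : 1 ≤ (M ^ τ * (1 + ‖ω‖ ^ 2) ^ τ) / (1 + δ ^ 2 * ‖ω‖ ^ 2) ^ τ :=
        (one_le_div hP).mpr h3
      rw [step2] at step1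
      linarith
    have h5 := div_bd_upper (F ω) (hatψ (δ • ω)) (c₁⁻¹ * M ^ τ * (1 + ‖ω‖ ^ 2) ^ τ)
      (hF0 ω) (hpos ω) key
    calc Bint ω ≤ (c₁⁻¹ * M ^ τ * (1 + ‖ω‖ ^ 2) ^ τ) * F ω := h5
      _ = (c₁⁻¹ * M ^ τ) * Aint ω := by simp only [hAdef]; ring
  -- A ≤ K₂ B pointwise, K₂ = c₂ M^τ / D²,  D = δ^τ
  set D : ℝ := δ ^ τ with hDdef
  have hD0 : 0 < D := Real.rpow_pos_of_pos hδ _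
  have hδ2τ : (δ ^ 2 / M) ^ τ = D ^ 2 / M ^ τ := by
    have h : ((δ ^ 2 : ℝ)) ^ τ = D ^ 2 := by
      rw [hDdef, ← Real.rpow_natCast δ 2, ← Real.rpow_natCast (δ ^ τ) 2,
        ← Real.rpow_mul hδ.le, ← Real.rpow_mul hδ.le, mul_comm]
    rw [Real.div_rpow (by positivity) hM0.le, h]
  have hAB : ∀ ω, Aint ω ≤ (c₂ * M ^ τ / D ^ 2) * Bint ω := by
    intro ω
    have hw0 : (0:ℝ) ≤ ‖ω‖ ^ 2 := by positivity
    have hP : (0:ℝ) < (1 + δ ^ 2 * ‖ω‖ ^ 2) ^ τ := Real.rpow_pos_of_pos (by positivity) _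
    have h1 := hhigh (δ • ω)
    rw [hnsm ω, Real.rpow_neg (by positivity)] at h1
    have h3 := hbdb (‖ω‖ ^ 2) hw0
    rw [hδ2τ] at h3
    have key : (D ^ 2 / (c₂ * M ^ τ) * (1 + ‖ω‖ ^ 2) ^ τ) * hatψ (δ • ω) ≤ 1 := by
      have step1 : (D ^ 2 / (c₂ * M ^ τ) * (1 + ‖ω‖ ^ 2) ^ τ) * hatψ (δ • ω)
          ≤ (D ^ 2 / (c₂ * M ^ τ) * (1 + ‖ω‖ ^ 2) ^ τ) *
            (c₂ * ((1 + δ ^ 2 * ‖ω‖ ^ 2) ^ τ)⁻¹) :=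
        mul_le_mul_of_nonneg_left h1 (by positivity)
      have step2 : (D ^ 2 / (c₂ * M ^ τ) * (1 + ‖ω‖ ^ 2) ^ τ) *
            (c₂ * ((1 + δ ^ 2 * ‖ω‖ ^ 2) ^ τ)⁻¹)
          = (D ^ 2 / M ^ τ * (1 + ‖ω‖ ^ 2) ^ τ) / (1 + δ ^ 2 * ‖ω‖ ^ 2) ^ τ := by
        field_simp
      have step3 : (D ^ 2 / M ^ τ * (1 + ‖ω‖ ^ 2) ^ τ) / (1 + δ ^ 2 * ‖ω‖ ^ 2) ^ τ ≤ 1 :=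
        (div_le_one hP).mpr h3
      rw [step2] at step1
      linarith
    have h5 := div_bd_lower (F ω) (hatψ (δ • ω)) (D ^ 2 / (c₂ * M ^ τ) * (1 + ‖ω‖ ^ 2) ^ τ)
      (hF0 ω) (hpos ω) key
    have heq : Aint ω = (c₂ * M ^ τ / D ^ 2) *
        ((D ^ 2 / (c₂ * M ^ τ) * (1 + ‖ω‖ ^ 2) ^ τ) * F ω) := by
      simp only [hAdef]
      field_simp
    rw [heq]
    exact mul_le_mul_of_nonneg_left h5 (by positivity)
  -- measurability and integrability
  have hAm : AEStronglyMeasurable Aint volume := hInt.aestronglyMeasurable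
  have hrc : Continuous fun ω : EuclideanSpace ℝ (Fin d) => ((1 + ‖ω‖ ^ 2) ^ τ : ℝ) :=
    (continuous_const.add (continuous_norm.pow 2)).rpow_const fun x => Or.inl (ne_of_gt (add_pos_of_pos_of_nonneg one_pos (sq_nonneg ‖x‖)))
  have hFm : AEStronglyMeasurable F volume := by
    have h6 : AEStronglyMeasurable (fun ω => Aint ω * ((1 + ‖ω‖ ^ 2) ^ τ)⁻¹) volume :=
      hAm.mul (hrc.inv₀ fun ω => by positivity).aestronglyMeasurable
    refine h6.congr (Filter.Eventually.of_forall fun ω => ?_)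
    simp only [hAdef]
    have hne : ((1 + ‖ω‖ ^ 2 : ℝ) ^ τ) ≠ 0 := by positivity
    field_simp
  have hhc : Continuous fun ω : EuclideanSpace ℝ (Fin d) => (hatψ (δ • ω))⁻¹ :=
    (hatc.comp (continuous_const_smul δ)).inv₀ fun ω => (hpos ω).ne'
  have hBm : AEStronglyMeasurable Bint volume := by
    have h6 : AEStronglyMeasurable (fun ω => F ω * (hatψ (δ • ω))⁻¹) volume :=
      hFm.mul hhc.aestronglyMeasurable
    exact h6.congr (Filter.Eventually.of_forall fun ω => by
      simp only [hBdef, div_eq_mul_inv])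
  have hB0 : ∀ ω, 0 ≤ Bint ω := fun ω => div_nonneg (hF0 ω) (hpos ω).le
  have hBint : Integrable Bint := by
    refine (hInt.const_mul (c₁⁻¹ * M ^ τ)).mono' hBm ?_
    filter_upwards with ω
    rw [Real.norm_eq_abs, abs_of_nonneg (hB0 ω)]
    exact hBA ω
  have hIA0 : 0 ≤ ∫ ω, Aint ω := integral_nonneg fun ω => by positivity
  have hIB0 : 0 ≤ ∫ ω, Bint ω := integral_nonneg hB0
  have hI1 : ∫ ω, Bint ω ≤ (c₁⁻¹ * M ^ τ) * ∫ ω, Aint ω := by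
    calc ∫ ω, Bint ω ≤ ∫ ω, (c₁⁻¹ * M ^ τ) * Aint ω :=
          integral_mono_of_nonneg (Filter.Eventually.of_forall hB0)
            (hInt.const_mul _) (Filter.Eventually.of_forall hBA)
      _ = (c₁⁻¹ * M ^ τ) * ∫ ω, Aint ω := integral_const_mul _ _
  have hI2 : ∫ ω, Aint ω ≤ (c₂ * M ^ τ / D ^ 2) * ∫ ω, Bint ω := by
    calc ∫ ω, Aint ω ≤ ∫ ω, (c₂ * M ^ τ / D ^ 2) * Bint ω :=
          integral_mono_of_nonneg (Filter.Eventually.of_forall fun ω => by positivity)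
            (hBint.const_mul _) (Filter.Eventually.of_forall hAB)
      _ = (c₂ * M ^ τ / D ^ 2) * ∫ ω, Bint ω := integral_const_mul _ _
  constructor
  · -- c₃ √(C·∫B) ≤ √(∫A)
    have h1 : C * ∫ ω, Bint ω ≤ (C * (c₁⁻¹ * M ^ τ)) * ∫ ω, Aint ω :=
      le_of_le_of_eq (mul_le_mul_of_nonneg_left hI1 hC.le) (by ring)
    have h2 : Real.sqrt (C * ∫ ω, Bint ω) ≤
        Real.sqrt (C * (c₁⁻¹ * M ^ τ)) * Real.sqrt (∫ ω, Aint ω) := by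
      rw [← Real.sqrt_mul (by positivity)]
      exact Real.sqrt_le_sqrt h1
    have h3 : Real.sqrt (c₁ / (C * M ^ τ)) * Real.sqrt (C * (c₁⁻¹ * M ^ τ)) = 1 := by
      rw [← Real.sqrt_mul (by positivity)]
      have h4 : c₁ / (C * M ^ τ) * (C * (c₁⁻¹ * M ^ τ)) = 1 := by field_simp
      rw [h4, Real.sqrt_one]
    calc Real.sqrt (c₁ / (C * M ^ τ)) * Real.sqrt (C * ∫ ω, Bint ω)
        ≤ Real.sqrt (c₁ / (C * M ^ τ)) *
            (Real.sqrt (C * (c₁⁻¹ * M ^ τ)) * Real.sqrt (∫ ω, Aint ω)) :=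
          mul_le_mul_of_nonneg_left h2 (Real.sqrt_nonneg _)
      _ = (Real.sqrt (c₁ / (C * M ^ τ)) * Real.sqrt (C * (c₁⁻¹ * M ^ τ))) *
            Real.sqrt (∫ ω, Aint ω) := by ring
      _ = Real.sqrt (∫ ω, Aint ω) := by rw [h3, one_mul]
  · -- √(∫A) ≤ c₄ δ^{-τ} √(C·∫B)
    have hδτ : δ ^ (-τ) = D⁻¹ := by rw [Real.rpow_neg hδ.le]
    have h1 : ∫ ω, Aint ω ≤ (c₂ * M ^ τ / (C * D ^ 2)) * (C * ∫ ω, Bint ω) := by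
      have heq : (c₂ * M ^ τ / (C * D ^ 2)) * (C * ∫ ω, Bint ω) =
          (c₂ * M ^ τ / D ^ 2) * ∫ ω, Bint ω := by
        field_simp
      rw [heq]; exact hI2
    calc Real.sqrt (∫ ω, Aint ω)
        ≤ Real.sqrt ((c₂ * M ^ τ / (C * D ^ 2)) * (C * ∫ ω, Bint ω)) := Real.sqrt_le_sqrt h1
      _ = Real.sqrt (c₂ * M ^ τ / (C * D ^ 2)) * Real.sqrt (C * ∫ ω, Bint ω) :=
          Real.sqrt_mul (by positivity) _
      _ = Real.sqrt (c₂ * M ^ τ / C) * δ ^ (-τ) * Real.sqrt (C * ∫ ω, Bint ω) := by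
          rw [hδτ]
          congr 1
          rw [show c₂ * M ^ τ / (C * D ^ 2) = (c₂ * M ^ τ / C) * (D⁻¹) ^ 2 by
              field_simp,
            Real.sqrt_mul (by positivity), Real.sqrt_sq (by positivity)]
end

section
/- Let τ > 1 and let ψ : ℝ^d → ℝ be an even integrable function whose Fourier transform satisfies c₁(1+‖ω‖₂²)^{-τ+1} ≤ ψ̂(ω) ≤ c₂(1+‖ω‖₂²)^{-τ+1} for all ω ∈ ℝ^d, with 0 < c₁ ≤ c₂. Then for all scale parameters 0 < a ≤ 1 with a ≤ δ ≤ 1, and for all ω ∈ ℝ^d, the Fourier transforms of the scaled kernels satisfy ψ̂_δ(ω) ≥ (c₁/c₂) (a/δ)^{2τ−2} ψ̂_a(ω). -/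
open MeasureTheory

/-- if `ψ̂` satisfies `c₁(1+‖ω‖²)^{-τ+1} ≤ ψ̂(ω) ≤ c₂(1+‖ω‖²)^{-τ+1}` with
`τ > 1`, then for `0 < a ≤ 1` with `a ≤ δ ≤ 1` and all `ω`:
`ψ̂_δ(ω) ≥ (c₁/c₂)(a/δ)^{2τ-2} ψ̂_a(ω)`, where `ψ̂_δ(ω) = ψ̂(δω)`. -/
theorem stmt11
    (d : ℕ) (hd : 0 < d) (τ : ℝ) (hτ : 1 < τ)
    (c₁ c₂ : ℝ) (hc₁ : 0 < c₁) (hc₁₂ : c₁ ≤ c₂)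
    (ψ : EuclideanSpace ℝ (Fin d) → ℝ)
    (hψint : Integrable ψ)
    (hψeven : ∀ x, ψ (-x) = ψ x)
    (hatψ : EuclideanSpace ℝ (Fin d) → ℝ)
    (hhat : ∀ ω, ft (fun x => (ψ x : ℂ)) ω = (hatψ ω : ℂ))
    (hlow : ∀ ω : EuclideanSpace ℝ (Fin d), c₁ * (1 + ‖ω‖ ^ 2) ^ (-τ + 1) ≤ hatψ ω)
    (hhigh : ∀ ω : EuclideanSpace ℝ (Fin d), hatψ ω ≤ c₂ * (1 + ‖ω‖ ^ 2) ^ (-τ + 1)) :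
    ∀ a δ : ℝ, 0 < a → a ≤ 1 → a ≤ δ → δ ≤ 1 →
      ∀ ω : EuclideanSpace ℝ (Fin d),
        c₁ / c₂ * (a / δ) ^ (2 * τ - 2) * hatψ (a • ω) ≤ hatψ (δ • ω) := by
  intro a δ ha ha1 haδ hδ1 ω
  have hδ : 0 < δ := lt_of_lt_of_le ha haδ
  have hτ1 : (0:ℝ) < τ - 1 := by linarith
  have hs0 : (0:ℝ) ≤ ‖ω‖ ^ 2 := sq_nonneg _
  set s := ‖ω‖ ^ 2 with hs
  have hna : ‖a • ω‖ ^ 2 = a ^ 2 * s := by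
    rw [norm_smul, Real.norm_eq_abs, abs_of_pos ha, mul_pow]
  have hnd : ‖δ • ω‖ ^ 2 = δ ^ 2 * s := by
    rw [norm_smul, Real.norm_eq_abs, abs_of_pos hδ, mul_pow]
  have hposA : (0:ℝ) < 1 + a ^ 2 * s := by positivity
  have hposD : (0:ℝ) < 1 + δ ^ 2 * s := by positivity
  have h1 : c₁ * (1 + δ ^ 2 * s) ^ (-τ + 1) ≤ hatψ (δ • ω) := by
    have := hlow (δ • ω); rwa [hnd] at this
  have h2 : hatψ (a • ω) ≤ c₂ * (1 + a ^ 2 * s) ^ (-τ + 1) := by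
    have := hhigh (a • ω); rwa [hna] at this
  have hc₂ : 0 < c₂ := lt_of_lt_of_le hc₁ hc₁₂
  have key : (a / δ) ^ (2 * τ - 2) * (1 + a ^ 2 * s) ^ (-τ + 1)
      ≤ (1 + δ ^ 2 * s) ^ (-τ + 1) := by
    have e : (-τ + 1) = -(τ - 1) := by ring
    have e2 : (2 * τ - 2) = 2 * (τ - 1) := by ring
    have hadpos : (0:ℝ) < a / δ := by positivity
    rw [e, e2, Real.rpow_neg hposA.le, Real.rpow_neg hposD.le,
        Real.rpow_mul hadpos.le]
    have hy : (0:ℝ) < (1 + a ^ 2 * s) ^ (τ - 1) := Real.rpow_pos_of_pos hposA _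
    have hz : (0:ℝ) < (1 + δ ^ 2 * s) ^ (τ - 1) := Real.rpow_pos_of_pos hposD _
    have hx : ((a / δ) ^ (2:ℝ)) ^ (τ - 1) * (1 + δ ^ 2 * s) ^ (τ - 1)
        ≤ (1 + a ^ 2 * s) ^ (τ - 1) := by
      rw [← Real.mul_rpow (by positivity) hposD.le]
      apply Real.rpow_le_rpow (by positivity) ?_ hτ1.le
      rw [show ((2:ℝ)) = ((2:ℕ):ℝ) by norm_num, Real.rpow_natCast, div_pow,
          div_mul_eq_mul_div, div_le_iff₀ (by positivity)]
      nlinarith [mul_self_le_mul_self ha.le haδ,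
        mul_nonneg (mul_nonneg (mul_nonneg ha.le ha.le) hδ.le) (mul_nonneg hδ.le hs0)]
    rw [← div_eq_mul_inv, ← one_div, div_le_div_iff₀ hy hz]
    linarith [hx]
  have hP : (0:ℝ) ≤ (a / δ) ^ (2 * τ - 2) := Real.rpow_nonneg (by positivity) _
  calc c₁ / c₂ * (a / δ) ^ (2 * τ - 2) * hatψ (a • ω)
      ≤ c₁ / c₂ * (a / δ) ^ (2 * τ - 2) * (c₂ * (1 + a ^ 2 * s) ^ (-τ + 1)) := by
        apply mul_le_mul_of_nonneg_left h2 (by positivity)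
    _ = c₁ * ((a / δ) ^ (2 * τ - 2) * (1 + a ^ 2 * s) ^ (-τ + 1)) := by
        field_simp
    _ ≤ c₁ * (1 + δ ^ 2 * s) ^ (-τ + 1) := by
        exact mul_le_mul_of_nonneg_left key hc₁.le
    _ ≤ hatψ (δ • ω) := h1
end

section
/- Let τ > −1 and let ψ : ℝ^d → ℝ be an even integrable function whose Fourier transform satisfies c₁(1+‖ω‖₂²)^{-τ-1} ≤ ψ̂(ω) ≤ c₂(1+‖ω‖₂²)^{-τ-1} for all ω ∈ ℝ^d, with 0 < c₁ ≤ c₂. Define the matrix-valued Fourier symbol Ψ̂_δ(ω) := (‖ω‖₂² I − ωω^T) ψ̂(δω) for δ > 0, where I is the d×d identity matrix. Then for all 0 < a ≤ 1 with a ≤ δ ≤ 1 and all ω ∈ ℝ^d, the matrix Ψ̂_δ(ω) − (c₁/c₂)(a/δ)^{2τ+2} Ψ̂_a(ω) is positive semidefinite. -/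
open MeasureTheory

/-- The matrix-valued Fourier symbol `Ψ̂_δ(ω) = (‖ω‖₂² I − ωω^T) ψ̂(δω)` of the
divergence-free kernel `Ψ_{τ+1,δ} = (−ΔI + ∇∇^T)ψ_δ`. -/
noncomputable def matSymbol {d : ℕ} (hatψ : EuclideanSpace ℝ (Fin d) → ℝ) (δ : ℝ)
    (ω : EuclideanSpace ℝ (Fin d)) : Matrix (Fin d) (Fin d) ℝ :=
  Matrix.of fun i j =>
    (‖ω‖ ^ 2 * (if i = j then 1 else 0) - ω i * ω j) * hatψ (δ • ω)

/-- if `ψ̂` satisfies `c₁(1+‖ω‖²)^{-τ-1} ≤ ψ̂(ω) ≤ c₂(1+‖ω‖²)^{-τ-1}` with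
`τ > -1`, then for `0 < a ≤ 1` with `a ≤ δ ≤ 1` and all `ω`, the matrix
`Ψ̂_δ(ω) − (c₁/c₂)(a/δ)^{2τ+2} Ψ̂_a(ω)` is positive semidefinite. -/
theorem stmt12
    (d : ℕ) (hd : 0 < d) (τ : ℝ) (hτ : -1 < τ)
    (c₁ c₂ : ℝ) (hc₁ : 0 < c₁) (hc₁₂ : c₁ ≤ c₂)
    (ψ : EuclideanSpace ℝ (Fin d) → ℝ)
    (hψint : Integrable ψ)
    (hψeven : ∀ x, ψ (-x) = ψ x)
    (hatψ : EuclideanSpace ℝ (Fin d) → ℝ)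
    (hhat : ∀ ω, ft (fun x => (ψ x : ℂ)) ω = (hatψ ω : ℂ))
    (hlow : ∀ ω : EuclideanSpace ℝ (Fin d), c₁ * (1 + ‖ω‖ ^ 2) ^ (-τ - 1) ≤ hatψ ω)
    (hhigh : ∀ ω : EuclideanSpace ℝ (Fin d), hatψ ω ≤ c₂ * (1 + ‖ω‖ ^ 2) ^ (-τ - 1)) :
    ∀ a δ : ℝ, 0 < a → a ≤ 1 → a ≤ δ → δ ≤ 1 →
      ∀ ω : EuclideanSpace ℝ (Fin d),
        (matSymbol hatψ δ ω - (c₁ / c₂ * (a / δ) ^ (2 * τ + 2)) • matSymbol hatψ a ω).PosSemidef := by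
  intro a δ ha ha1 haδ hδ1 ω
  have hδ0 : (0:ℝ) < δ := lt_of_lt_of_le ha haδ
  have hc₂ : (0:ℝ) < c₂ := hc₁.trans_le hc₁₂
  set r : ℝ := ‖ω‖ ^ 2 with hr
  have hr0 : 0 ≤ r := sq_nonneg _
  set c : ℝ := c₁ / c₂ * (a / δ) ^ (2 * τ + 2) with hcdef
  have hc0 : 0 ≤ c := by positivity
  -- norms of scaled points
  have hna : ‖a • ω‖ ^ 2 = a ^ 2 * r := by
    rw [norm_smul, Real.norm_eq_abs, abs_of_pos ha, mul_pow, hr]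
  have hnδ : ‖δ • ω‖ ^ 2 = δ ^ 2 * r := by
    rw [norm_smul, Real.norm_eq_abs, abs_of_pos hδ0, mul_pow, hr]
  have hA : (0:ℝ) < 1 + a ^ 2 * r := by positivity
  have hD : (0:ℝ) < 1 + δ ^ 2 * r := by positivity
  -- key rpow inequality
  have hbase : (a / δ) ^ (2:ℕ) / (1 + a ^ 2 * r) ≤ (1 + δ ^ 2 * r)⁻¹ := by
    rw [inv_eq_one_div, div_pow, div_div, div_le_div_iff₀ (by positivity) hD]
    nlinarith [pow_le_pow_left₀ ha.le haδ 2, mul_nonneg hr0 (sq_nonneg a), mul_nonneg hr0 (sq_nonneg δ)]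
  have hτ1 : (0:ℝ) < τ + 1 := by linarith
  have hpow : (a / δ) ^ (2 * τ + 2) * (1 + a ^ 2 * r) ^ (-τ - 1) ≤ (1 + δ ^ 2 * r) ^ (-τ - 1) := by
    have haδ0 : (0:ℝ) ≤ a / δ := by positivity
    have e1 : (a / δ) ^ (2 * τ + 2) = ((a / δ) ^ (2:ℕ)) ^ (τ + 1) := by
      rw [show (2 * τ + 2 : ℝ) = ((2:ℕ):ℝ) * (τ + 1) by push_cast; ring,
        Real.rpow_mul haδ0, Real.rpow_natCast]
    have e2 : (1 + a ^ 2 * r) ^ (-τ - 1) = ((1 + a ^ 2 * r) ^ (τ + 1))⁻¹ := by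
      rw [show -τ - 1 = -(τ + 1) by ring, Real.rpow_neg hA.le]
    have e3 : (1 + δ ^ 2 * r) ^ (-τ - 1) = ((1 + δ ^ 2 * r)⁻¹) ^ (τ + 1) := by
      rw [show -τ - 1 = -(τ + 1) by ring, Real.rpow_neg hD.le, ← Real.inv_rpow hD.le]
    rw [e1, e2, e3, ← div_eq_mul_inv, ← Real.div_rpow (by positivity) hA.le]
    exact Real.rpow_le_rpow (by positivity) hbase hτ1.le
  -- nonnegativity of the scalar factor
  have hkey : c * hatψ (a • ω) ≤ hatψ (δ • ω) := by
    have h1 : hatψ (a • ω) ≤ c₂ * (1 + a ^ 2 * r) ^ (-τ - 1) := by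
      have := hhigh (a • ω); rwa [hna] at this
    have h2 : c₁ * (1 + δ ^ 2 * r) ^ (-τ - 1) ≤ hatψ (δ • ω) := by
      have := hlow (δ • ω); rwa [hnδ] at this
    calc c * hatψ (a • ω) ≤ c * (c₂ * (1 + a ^ 2 * r) ^ (-τ - 1)) :=
          mul_le_mul_of_nonneg_left h1 hc0
      _ = c₁ * ((a / δ) ^ (2 * τ + 2) * (1 + a ^ 2 * r) ^ (-τ - 1)) := by
          rw [hcdef]; field_simp
      _ ≤ c₁ * (1 + δ ^ 2 * r) ^ (-τ - 1) := mul_le_mul_of_nonneg_left hpow hc₁.le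
      _ ≤ hatψ (δ • ω) := h2
  set t : ℝ := hatψ (δ • ω) - c * hatψ (a • ω) with htdef
  have ht0 : 0 ≤ t := sub_nonneg.2 hkey
  set A : Matrix (Fin d) (Fin d) ℝ :=
    Matrix.of (fun i j => r * (if i = j then 1 else 0) - ω i * ω j) with hAdef
  have hM : matSymbol hatψ δ ω - c • matSymbol hatψ a ω = t • A := by
    ext i j
    simp only [Matrix.sub_apply, Matrix.smul_apply, matSymbol, Matrix.of_apply, hAdef,
      smul_eq_mul, htdef, hr]
    ring
  rw [hM, Matrix.posSemidef_iff_dotProduct_mulVec]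
  constructor
  · ext i j
    by_cases h : i = j
    · subst h; rfl
    · have h' : ¬ j = i := fun hji => h hji.symm
      simp only [Matrix.conjTranspose_apply, Matrix.smul_apply, Matrix.of_apply, hAdef,
        smul_eq_mul, star_trivial, if_neg h, if_neg h']
      ring
  · intro x
    set s : ℝ := ∑ i, ω i * x i with hsdef
    have hmv : ∀ i, ((t • A).mulVec x) i = t * (r * x i - ω i * s) := by
      intro i
      show (∑ j, (t • A) i j * x j) = _
      have step : ∀ j, (t • A) i j * x j
          = (if i = j then t * r * x j else 0) - t * (ω i * (ω j * x j)) := by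
        intro j
        show t * ((r * if i = j then 1 else 0) - ω i * ω j) * x j = _
        by_cases h : i = j
        · rw [if_pos h, if_pos h, h]; ring
        · rw [if_neg h, if_neg h]; ring
      rw [Finset.sum_congr rfl (fun j _ => step j), Finset.sum_sub_distrib,
        Finset.sum_ite_eq Finset.univ i (fun j => t * r * x j), if_pos (Finset.mem_univ i),
        ← Finset.mul_sum, ← Finset.mul_sum, hsdef]
      ring
    have hq : dotProduct (star x) ((t • A).mulVec x)
        = t * (r * (∑ i, x i ^ 2) - s ^ 2) := by
      show (∑ i, x i * ((t • A).mulVec x) i) = _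
      have e : ∀ i, x i * ((t • A).mulVec x) i
          = t * r * x i ^ 2 - t * s * (ω i * x i) := by
        intro i; rw [hmv i]; ring
      rw [Finset.sum_congr rfl (fun i _ => e i), Finset.sum_sub_distrib,
        ← Finset.mul_sum, ← Finset.mul_sum, hsdef]
      ring
    have hCS : s ^ 2 ≤ r * ∑ i, x i ^ 2 := by
      set y : EuclideanSpace ℝ (Fin d) := (WithLp.equiv 2 _).symm x with hy
      have h1 : s = @inner ℝ _ _ ω y := by
        rw [PiLp.inner_apply]; simp [hy, hsdef, RCLike.inner_apply]; exact Finset.sum_congr rfl (fun i _ => mul_comm _ _)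
      have h2 : (∑ i, x i ^ 2) = @inner ℝ _ _ y y := by
        rw [PiLp.inner_apply]; simp [hy, RCLike.inner_apply, sq]
      have h3 : r = @inner ℝ _ _ ω ω := by
        rw [hr, real_inner_self_eq_norm_sq]
      rw [h1, h2, h3, sq]
      exact real_inner_mul_inner_self_le ω y
    rw [hq]
    exact mul_nonneg ht0 (sub_nonneg.2 hCS)
end
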